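/- A map ε : X×X∖Δ → P(M) is a Fitch map if and only if (1) the collection N[ε] of complementary neighborhoods is hierarchy-like, and (2) for every neighborhood N = N_{¬m}[y] ∈ N[ε] and every y' ∈ N one has |N_{¬m}[y']| ≤ |N|. -/

import Mathlib

/-- A finite rooted phylogenetic tree on leaf set `X`, with vertex type `V`.
Vertices are encoded via a parent function; `par root = root`. -/
structure PhyloTree (V X : Type) : Type where
  fin : Finite V
  root : V
  par : V → V
  par_root : par root = root
  reach : ∀ v : V, ∃ n : ℕ, par^[n] v = root
  leaf : X → V
  leaf_inj : Function.Injective leaf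
  leaf_isLeaf : ∀ (x : X) (u : V), par u = leaf x → u = leaf x
  leaf_only : ∀ v : V, (∀ u : V, par u = v → u = v) → ∃ x : X, leaf x = v
  root_deg : (∃ x : X, leaf x = root) ∨ 2 ≤ {u : V | par u = root ∧ u ≠ root}.ncard
  inner_deg : ∀ v : V, v ≠ root → (¬ ∃ x : X, leaf x = v) →
      2 ≤ {u : V | par u = v ∧ u ≠ v}.ncard

namespace PhyloTree

variable {V X : Type}

/-- `T.anc u v` : `u` is an ancestor of `v`, i.e. `u ⪯_T v`. -/
def anc (T : PhyloTree V X) (u v : V) : Prop := ∃ n : ℕ, T.par^[n] v = u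

/-- `l` is the last common ancestor of `a` and `b`. -/
def IsLca (T : PhyloTree V X) (l a b : V) : Prop :=
  T.anc l a ∧ T.anc l b ∧ ∀ u : V, T.anc u a → T.anc u b → T.anc u l

/-- The cluster of `v`: the set of leaves below `v`. -/
def cluster (T : PhyloTree V X) (v : V) : Set X := {x : X | T.anc v (T.leaf x)}

/-- The cluster set `C(T)`. -/
def clusterSet (T : PhyloTree V X) : Set (Set X) := {S : Set X | ∃ v : V, S = T.cluster v}

/-- The edge `(par u, u)` lies on the descending path from `a` down to `b`. -/
def edgeOnDown (T : PhyloTree V X) (a b u : V) : Prop :=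
  T.anc a u ∧ u ≠ a ∧ T.anc u b

/-- The edge `(par u, u)` lies on the unique path between `v` and `w`. -/
def edgeOnPath (T : PhyloTree V X) (v w u : V) : Prop :=
  ∃ l : V, T.IsLca l v w ∧ (T.edgeOnDown l v u ∨ T.edgeOnDown l w u)

/-- `T` displays the rooted triple `ab|c`. -/
def Displays (T : PhyloTree V X) (a b c : X) : Prop :=
  ∃ l3 l2 : V, T.IsLca l2 (T.leaf a) (T.leaf b) ∧
    T.IsLca l3 l2 (T.leaf c) ∧ l3 ≠ l2

end PhyloTree

/-- `(T, lab)` explains `ε` : for distinct leaves `x,y`, `m ∈ ε x y` iff there is an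
`m`-edge on the path from `lca(x,y)` down to `y`. -/
def Explains {V X M : Type} (T : PhyloTree V X) (lab : V → Set M)
    (ε : X → X → Set M) : Prop :=
  ∀ x y : X, x ≠ y → ∀ m : M,
    (m ∈ ε x y ↔ ∃ l : V, T.IsLca l (T.leaf x) (T.leaf y) ∧
      ∃ u : V, T.edgeOnDown l (T.leaf y) u ∧ m ∈ lab u)

/-- `ε` is a Fitch map: it is explained by some edge-labeled phylogenetic tree. -/
def IsFitchMap {X M : Type} (ε : X → X → Set M) : Prop :=
  ∃ (V : Type) (T : PhyloTree V X) (lab : V → Set M), Explains T lab ε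

/-- The complementary neighborhood `N_{¬m}[y]`. -/
def Nbr {X M : Type} (ε : X → X → Set M) (m : M) (y : X) : Set X :=
  {x : X | x ≠ y ∧ m ∉ ε x y} ∪ {y}

/-- The collection `N[ε]` of all complementary neighborhoods. -/
def NbrSet {X M : Type} (ε : X → X → Set M) : Set (Set X) :=
  {N : Set X | ∃ (m : M) (y : X), N = Nbr ε m y}

/-- A set system is hierarchy-like if any two members intersect in `∅` or one of them. -/
def HLike {X : Type} (H : Set (Set X)) : Prop :=
  ∀ P ∈ H, ∀ Q ∈ H, P ∩ Q = P ∨ P ∩ Q = Q ∨ P ∩ Q = ∅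

/-- The inequality condition (IC). -/
def IneqCond {X M : Type} (ε : X → X → Set M) : Prop :=
  ∀ (m : M) (y y' : X), y' ∈ Nbr ε m y → (Nbr ε m y').ncard ≤ (Nbr ε m y).ncard



namespace FitchAux
open Function Set PhyloTree
variable {V X : Type} (T : PhyloTree V X)

lemma anc_refl (v : V) : T.anc v v := ⟨0, rfl⟩

lemma anc_trans {u v w : V} (h1 : T.anc u v) (h2 : T.anc w u) : T.anc w v := by
  obtain ⟨i, hi⟩ := h1; obtain ⟨j, hj⟩ := h2
  exact ⟨j + i, by rw [Function.iterate_add_apply, hi, hj]⟩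

lemma iterate_root (n : ℕ) : T.par^[n] T.root = T.root := by
  induction n with
  | zero => rfl
  | succ n ih => rw [Function.iterate_succ_apply', ih, T.par_root]

lemma anc_root (v : V) : T.anc T.root v := T.reach v

lemma anc_antisymm {u v : V} (h1 : T.anc u v) (h2 : T.anc v u) : u = v := by
  obtain ⟨i, hi⟩ := h1; obtain ⟨j, hj⟩ := h2
  rcases Nat.eq_zero_or_pos (i + j) with h0 | hpos
  · obtain ⟨hi0, _⟩ := Nat.add_eq_zero.mp h0
    subst hi0; simpa using hi.symm
  · -- v is periodic with period i+j, and reaches root, so v = root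
    have hper : T.par^[j + i] v = v := by
      rw [Function.iterate_add_apply, hi, hj]
    have hper' : ∀ k, T.par^[k * (j + i)] v = v := by
      intro k
      induction k with
      | zero => simp
      | succ k ih => rw [Nat.succ_mul, Function.iterate_add_apply, hper, ih]
    obtain ⟨n, hn⟩ := T.reach v
    have hroot : ∀ m, n ≤ m → T.par^[m] v = T.root := by
      intro m hm
      rw [show m = (m - n) + n by omega, Function.iterate_add_apply, hn, iterate_root]
    have hvr : v = T.root := by
      have h1' : n ≤ (n + 1) * (j + i) := by nlinarith [Nat.one_le_iff_ne_zero.mpr (by omega : j + i ≠ 0)]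
      rw [← hper' (n + 1), hroot _ h1']
    have hur : u = T.root := by
      rw [← hi, hvr, iterate_root]
    rw [hur, hvr]

lemma anc_comparable {u v w : V} (h1 : T.anc u w) (h2 : T.anc v w) :
    T.anc u v ∨ T.anc v u := by
  obtain ⟨i, hi⟩ := h1; obtain ⟨j, hj⟩ := h2
  rcases le_or_gt i j with h | h
  · right
    exact ⟨j - i, by rw [← hi, ← Function.iterate_add_apply, Nat.sub_add_cancel h, hj]⟩
  · left
    exact ⟨i - j, by rw [← hj, ← Function.iterate_add_apply, Nat.sub_add_cancel h.le, hi]⟩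

lemma exists_isLca (a b : V) : ∃ l : V, T.IsLca l a b := by
  classical
  set K : Set ℕ := {k | T.anc (T.par^[k] a) b} with hK
  have hKne : K.Nonempty := by
    obtain ⟨n, hn⟩ := T.reach a
    exact ⟨n, by simp only [K, Set.mem_setOf_eq, hn]; exact anc_root T b⟩
  have hmem := Nat.sInf_mem hKne
  refine ⟨T.par^[sInf K] a, ⟨sInf K, rfl⟩, hmem, ?_⟩
  intro u hua hub
  obtain ⟨j, hj⟩ := hua
  have hjK : j ∈ K := by simp only [K, Set.mem_setOf_eq, hj]; exact hub
  have hle : sInf K ≤ j := Nat.sInf_le hjK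
  exact ⟨j - sInf K, by rw [← Function.iterate_add_apply, Nat.sub_add_cancel hle, hj]⟩

lemma cluster_mono {u v : V} (h : T.anc u v) : T.cluster v ⊆ T.cluster u :=
  fun _ hx => anc_trans T hx h


variable {M : Type}

lemma mem_nbr_self {ε : X → X → Set M} (m : M) (y : X) : y ∈ Nbr ε m y := Or.inr rfl

lemma mem_nbr_iff {ε : X → X → Set M} {m : M} {x y : X} (hxy : x ≠ y) :
    x ∈ Nbr ε m y ↔ m ∉ ε x y := by
  simp [Nbr, hxy]

/-- The key structural lemma: each complementary neighborhood is a cluster of the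
maximal `m`-free ancestor. -/
lemma nbr_eq_cluster {lab : V → Set M} {ε : X → X → Set M} (hex : Explains T lab ε)
    (m : M) (y : X) :
    ∃ v : V, Nbr ε m y = T.cluster v ∧
      (∀ u : V, T.edgeOnDown v (T.leaf y) u → m ∉ lab u) ∧
      (∀ w : V, T.anc w (T.leaf y) →
        (∀ u : V, T.edgeOnDown w (T.leaf y) u → m ∉ lab u) → T.anc v w) := by
  classical
  obtain ⟨n0, hn0⟩ := T.reach (T.leaf y)
  set P : ℕ → Prop := fun k => ∀ u : V, T.edgeOnDown (T.par^[k] (T.leaf y)) (T.leaf y) u → m ∉ lab u with hP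
  set B : Set ℕ := {k | k ≤ n0 ∧ P k} with hB
  have h0B : 0 ∈ B := by
    refine ⟨Nat.zero_le _, ?_⟩
    rintro u ⟨h1, h2, h3⟩
    exact absurd (anc_antisymm T h3 h1) h2
  have hbdd : BddAbove B := ⟨n0, fun k hk => hk.1⟩
  set n := sSup B with hn
  have hnB : n ∈ B := Nat.sSup_mem ⟨0, h0B⟩ hbdd
  set v := T.par^[n] (T.leaf y) with hv
  have hvy : T.anc v (T.leaf y) := ⟨n, rfl⟩
  have hmax : ∀ w : V, T.anc w (T.leaf y) →
      (∀ u : V, T.edgeOnDown w (T.leaf y) u → m ∉ lab u) → T.anc v w := by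
    intro w hw hwfree
    obtain ⟨k, hk⟩ := hw
    have hk' : T.par^[min k n0] (T.leaf y) = w := by
      rcases le_or_gt k n0 with h | h
      · rwa [min_eq_left h]
      · rw [min_eq_right h.le, hn0, ← hk, show k = (k - n0) + n0 by omega,
          Function.iterate_add_apply, hn0, iterate_root]
    have hmemB : min k n0 ∈ B := ⟨min_le_right _ _, by rw [hP]; simpa [hk'] using hwfree⟩
    have hle : min k n0 ≤ n := le_csSup hbdd hmemB
    exact ⟨n - min k n0, by rw [hv, ← hk', ← Function.iterate_add_apply, Nat.sub_add_cancel hle]⟩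
  have hfree : ∀ u : V, T.edgeOnDown v (T.leaf y) u → m ∉ lab u := hnB.2
  refine ⟨v, ?_, hfree, hmax⟩
  ext x
  by_cases hxy : x = y
  · subst hxy
    simp only [mem_nbr_self, true_iff]
    exact hvy
  · rw [mem_nbr_iff hxy]
    constructor
    · intro hme
      -- no m-edge on path lca(x,y) → y
      obtain ⟨l, hl⟩ := exists_isLca T (T.leaf x) (T.leaf y)
      have hnoedge : ∀ u : V, T.edgeOnDown l (T.leaf y) u → m ∉ lab u := by
        intro u hu hmu
        exact hme (((hex x y hxy m).mpr ⟨l, hl, u, hu, hmu⟩))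
      have : T.anc v l := hmax l hl.2.1 hnoedge
      exact anc_trans T hl.1 this
    · intro hx hme
      obtain ⟨l, hl, u, hu, hmu⟩ := (hex x y hxy m).mp hme
      have hvl : T.anc v l := hl.2.2 v hx hvy
      have : T.edgeOnDown v (T.leaf y) u := by
        refine ⟨anc_trans T hu.1 hvl, ?_, hu.2.2⟩
        intro hueq
        subst hueq
        exact hu.2.1 (anc_antisymm T hvl hu.1)
      exact hfree u this hmu

lemma forward_hlc {lab : V → Set M} {ε : X → X → Set M} (hex : Explains T lab ε) :
    HLike (NbrSet ε) := by
  rintro P ⟨m, y, rfl⟩ Q ⟨m', y', rfl⟩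
  obtain ⟨v, hv, -, -⟩ := nbr_eq_cluster T hex m y
  obtain ⟨w, hw, -, -⟩ := nbr_eq_cluster T hex m' y'
  rw [hv, hw]
  rcases Set.eq_empty_or_nonempty (T.cluster v ∩ T.cluster w) with h | ⟨z, hz1, hz2⟩
  · exact Or.inr (Or.inr h)
  · rcases anc_comparable T hz1 hz2 with h | h
    · exact Or.inr (Or.inl (Set.inter_eq_right.mpr (cluster_mono T h)))
    · exact Or.inl (Set.inter_eq_left.mpr (cluster_mono T h))

lemma forward_ic [Fintype X] {lab : V → Set M} {ε : X → X → Set M}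
    (hex : Explains T lab ε) : IneqCond ε := by
  intro m y y' hy'
  obtain ⟨v, hv, hvfree, hvmax⟩ := nbr_eq_cluster T hex m y
  obtain ⟨v', hv', hv'free, hv'max⟩ := nbr_eq_cluster T hex m y'
  have hy'v : T.anc v (T.leaf y') := by rw [hv] at hy'; exact hy'
  have hvv' : T.anc v v' := by
    have hv'ly' : T.anc v' (T.leaf y') := by
      have h := mem_nbr_self (ε := ε) m y'
      rw [hv'] at h; exact h
    rcases anc_comparable T hy'v hv'ly' with h | h
    · exact h
    · -- v' is (weakly) above v; show v' is m-free for y, then use maximality of v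
      by_cases hvv : v = v'
      · exact hvv ▸ anc_refl T v
      have hv'y : T.anc v' (T.leaf y) := by
        -- v' above v, v above leaf y
        have hvly : T.anc v (T.leaf y) := by
          have := mem_nbr_self (ε := ε) m y
          rw [hv] at this; exact this
        exact anc_trans T hvly h
      refine hvmax v' hv'y ?_
      intro u hu
      -- u is an edge on the path v' → leaf y
      obtain ⟨hu1, hu2, hu3⟩ := hu
      have hvly : T.anc v (T.leaf y) := by
        have := mem_nbr_self (ε := ε) m y
        rw [hv] at this; exact this
      by_cases huv : u = v
      · -- the edge above v: lies on the path v' → leaf y'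
        subst huv
        exact hv'free u ⟨hu1, fun h' => hvv (h'.symm ▸ rfl), hy'v⟩
      · rcases anc_comparable T hu3 hvly with h1 | h1
        · -- u weakly above v (and u ≠ v): edge on v' → leaf y'
          exact hv'free u ⟨hu1, hu2, anc_trans T hy'v h1⟩
        · -- u strictly below v : edge on v → leaf y
          exact hvfree u ⟨h1, huv, hu3⟩
  have : Nbr ε m y' ⊆ Nbr ε m y := by
    rw [hv, hv']
    exact cluster_mono T hvv'
  exact Set.ncard_le_ncard this (Set.toFinite _)

end FitchAux

namespace FitchAux
section Backward
set_option linter.unusedSectionVars false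
open Function Set
variable {X M : Type} [Fintype X] [Nonempty X]

variable (ε : X → X → Set M)

/-- The hierarchy: all complementary neighborhoods, the full set, and all singletons. -/
def Hier : Set (Set X) := NbrSet ε ∪ {Set.univ} ∪ Set.range (fun x => ({x} : Set X))

variable {ε}

lemma univ_mem_Hier : (Set.univ : Set X) ∈ Hier ε := Or.inl (Or.inr rfl)
lemma singleton_mem_Hier (x : X) : ({x} : Set X) ∈ Hier ε := Or.inr ⟨x, rfl⟩
lemma nbr_mem_Hier (m : M) (y : X) : Nbr ε m y ∈ Hier ε := Or.inl (Or.inl ⟨m, y, rfl⟩)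

lemma Hier_nonempty {S : Set X} (hS : S ∈ Hier ε) : S.Nonempty := by
  rcases hS with (⟨m, y, rfl⟩ | rfl) | ⟨x, rfl⟩
  · exact ⟨y, mem_nbr_self m y⟩
  · exact Set.univ_nonempty
  · exact ⟨x, rfl⟩

/-- Under HLC, any two members of the hierarchy sharing a point are comparable. -/
lemma Hier_comp (hl : HLike (NbrSet ε)) {P Q : Set X} (hP : P ∈ Hier ε) (hQ : Q ∈ Hier ε)
    {z : X} (hzP : z ∈ P) (hzQ : z ∈ Q) : P ⊆ Q ∨ Q ⊆ P := by
  rcases hP with (hP | rfl) | ⟨x, rfl⟩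
  · rcases hQ with (hQ | rfl) | ⟨x', rfl⟩
    · rcases hl P hP Q hQ with h | h | h
      · exact Or.inl (Set.inter_eq_left.mp h)
      · exact Or.inr (Set.inter_eq_right.mp h)
      · exact absurd (Set.mem_inter hzP hzQ) (h ▸ Set.notMem_empty z)
    · exact Or.inl (Set.subset_univ P)
    · rcases hzQ with rfl
      exact Or.inr (Set.singleton_subset_iff.mpr hzP)
  · exact Or.inr (Set.subset_univ Q)
  · rcases hzP with rfl
    exact Or.inl (Set.singleton_subset_iff.mpr hzQ)

/-- Under HLC + IC, complementary neighborhoods are monotone. -/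
lemma nbr_mono (hl : HLike (NbrSet ε)) (hic : IneqCond ε) {m : M} {z y : X}
    (h : y ∈ Nbr ε m z) : Nbr ε m y ⊆ Nbr ε m z := by
  have hcomp := Hier_comp hl (nbr_mem_Hier m y) (nbr_mem_Hier m z)
    (mem_nbr_self m y) h
  rcases hcomp with h' | h'
  · exact h'
  · have := hic m z y h
    rw [Set.eq_of_subset_of_ncard_le h' this (Set.toFinite _)]

/-- Existence of a least element of any pointed finite subfamily of the hierarchy. -/
lemma exists_least (hl : HLike (NbrSet ε)) {F : Set (Set X)} (hF : F ⊆ Hier ε)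
    (hne : F.Nonempty) (z : X) (hz : ∀ S ∈ F, z ∈ S) :
    ∃ L ∈ F, ∀ T ∈ F, L ⊆ T := by
  obtain ⟨L, hLF, hLmin⟩ := Set.Finite.exists_minimalFor Set.ncard F (Set.toFinite F) hne
  refine ⟨L, hLF, fun T hTF => ?_⟩
  rcases Hier_comp hl (hF hLF) (hF hTF) (hz L hLF) (hz T hTF) with h | h
  · exact h
  · have := hLmin hTF (Set.ncard_le_ncard h (Set.toFinite _))
    exact (Set.eq_of_subset_of_ncard_le h this (Set.toFinite _)).ge

/-- The vertex type of the constructed tree. -/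
abbrev Vx (ε : X → X → Set M) : Type := {S : Set X // S ∈ Hier ε}

instance : Finite (Vx ε) := Subtype.finite

variable (ε) in
/-- The parent map: the least strict superset in the hierarchy (or self at the top). -/
noncomputable def parH (hl : HLike (NbrSet ε)) (S : Vx ε) : Vx ε :=
  letI := Classical.propDecidable {T | T ∈ Hier ε ∧ S.val ⊂ T}.Nonempty
  if h : {T | T ∈ Hier ε ∧ S.val ⊂ T}.Nonempty then
    ⟨(exists_least hl (fun T hT => hT.1) h (Hier_nonempty S.2).choose
        (fun T hT => hT.2.subset (Hier_nonempty S.2).choose_spec)).choose,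
     (exists_least hl (fun T hT => hT.1) h (Hier_nonempty S.2).choose
        (fun T hT => hT.2.subset (Hier_nonempty S.2).choose_spec)).choose_spec.1.1⟩
  else S

variable (hl : HLike (NbrSet ε))

lemma parH_spec (S : Vx ε) (h : {T | T ∈ Hier ε ∧ S.val ⊂ T}.Nonempty) :
    S.val ⊂ (parH ε hl S).val ∧ ∀ T ∈ Hier ε, S.val ⊂ T → (parH ε hl S).val ⊆ T := by
  rw [parH, dif_pos h]
  have hspec := (exists_least hl (F := {T | T ∈ Hier ε ∧ S.val ⊂ T})
      (fun T hT => hT.1) h (Hier_nonempty S.2).choose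
      (fun T hT => hT.2.subset (Hier_nonempty S.2).choose_spec)).choose_spec
  exact ⟨hspec.1.2, fun T hT hsub => hspec.2 T ⟨hT, hsub⟩⟩

lemma parH_eq_self (S : Vx ε) (h : ¬ {T | T ∈ Hier ε ∧ S.val ⊂ T}.Nonempty) :
    parH ε hl S = S := by rw [parH, dif_neg h]

lemma parH_ne_top {S : Vx ε} (h : S.val ≠ Set.univ) :
    S.val ⊂ (parH ε hl S).val ∧ ∀ T ∈ Hier ε, S.val ⊂ T → (parH ε hl S).val ⊆ T :=
  parH_spec hl S ⟨Set.univ, univ_mem_Hier, Set.ssubset_univ_iff.mpr h⟩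

lemma parH_univ : parH ε hl ⟨Set.univ, univ_mem_Hier⟩ = ⟨Set.univ, univ_mem_Hier⟩ := by
  refine parH_eq_self hl _ ?_
  rintro ⟨T, -, hT⟩
  exact hT.not_subset (Set.subset_univ T)

lemma subset_parH (S : Vx ε) : S.val ⊆ (parH ε hl S).val := by
  by_cases h : {T | T ∈ Hier ε ∧ S.val ⊂ T}.Nonempty
  · exact (parH_spec hl S h).1.subset
  · rw [parH_eq_self hl S h]

lemma val_eq_univ_of_ncard {S : Vx ε} (h : (Set.univ : Set X).ncard ≤ S.val.ncard) :
    S.val = Set.univ :=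
  Set.eq_of_subset_of_ncard_le (Set.subset_univ S.val) h (Set.toFinite _)

lemma parH_reach_aux : ∀ (k : ℕ) (S : Vx ε), (Set.univ : Set X).ncard - S.val.ncard ≤ k →
    ∃ n : ℕ, (parH ε hl)^[n] S = ⟨Set.univ, univ_mem_Hier⟩ := by
  intro k
  induction k with
  | zero =>
    intro S hS
    have h1 : S.val.ncard ≤ (Set.univ : Set X).ncard :=
      Set.ncard_le_ncard (Set.subset_univ S.val) (Set.toFinite _)
    have hS2 : S.val = Set.univ := val_eq_univ_of_ncard (by omega)
    exact ⟨0, Subtype.ext hS2⟩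
  | succ k ih =>
    intro S hS
    by_cases h : S.val = Set.univ
    · exact ⟨0, Subtype.ext h⟩
    · have hsp := (parH_ne_top hl h).1
      have hlt : S.val.ncard < (parH ε hl S).val.ncard :=
        Set.ncard_lt_ncard hsp (Set.toFinite _)
      have hle : (parH ε hl S).val.ncard ≤ (Set.univ : Set X).ncard :=
        Set.ncard_le_ncard (Set.subset_univ _) (Set.toFinite _)
      obtain ⟨n, hn⟩ := ih (parH ε hl S) (by omega)
      exact ⟨n + 1, by rw [Function.iterate_succ_apply, hn]⟩

lemma parH_reach (S : Vx ε) : ∃ n : ℕ, (parH ε hl)^[n] S = ⟨Set.univ, univ_mem_Hier⟩ :=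
  parH_reach_aux hl (Set.univ : Set X).ncard S (Nat.sub_le _ _)

/-- `anc` in the constructed tree is reverse inclusion. -/
lemma parH_anc_aux : ∀ (k : ℕ) (U S : Vx ε), (Set.univ : Set X).ncard - S.val.ncard ≤ k →
    S.val ⊆ U.val → ∃ n : ℕ, (parH ε hl)^[n] S = U := by
  intro k
  induction k with
  | zero =>
    intro U S hk hsub
    have h1 : S.val.ncard ≤ (Set.univ : Set X).ncard :=
      Set.ncard_le_ncard (Set.subset_univ S.val) (Set.toFinite _)
    have hS : S.val = Set.univ := val_eq_univ_of_ncard (by omega)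
    have hU : U.val = S.val := by
      rw [hS] at hsub ⊢
      exact (Set.univ_subset_iff.mp hsub)
    exact ⟨0, Subtype.ext hU.symm⟩
  | succ k ih =>
    intro U S hk hsub
    by_cases h : S = U
    · exact ⟨0, h⟩
    · have hss : S.val ⊂ U.val := by
        refine ⟨hsub, fun h' => h (Subtype.ext (le_antisymm hsub h'))⟩
      have hp := parH_spec hl S ⟨U.val, U.2, hss⟩
      have hsubP : (parH ε hl S).val ⊆ U.val := hp.2 U.val U.2 hss
      have hlt : S.val.ncard < (parH ε hl S).val.ncard :=
        Set.ncard_lt_ncard hp.1 (Set.toFinite _)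
      have hle : (parH ε hl S).val.ncard ≤ (Set.univ : Set X).ncard :=
        Set.ncard_le_ncard (Set.subset_univ _) (Set.toFinite _)
      obtain ⟨n, hn⟩ := ih U (parH ε hl S) (by omega) hsubP
      exact ⟨n + 1, by rw [Function.iterate_succ_apply, hn]⟩

lemma parH_anc {U S : Vx ε} (hsub : S.val ⊆ U.val) :
    ∃ n : ℕ, (parH ε hl)^[n] S = U :=
  parH_anc_aux hl (Set.univ : Set X).ncard U S (Nat.sub_le _ _) hsub

lemma anc_subset {U S : Vx ε} (h : ∃ n : ℕ, (parH ε hl)^[n] S = U) : S.val ⊆ U.val := by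
  obtain ⟨n, rfl⟩ := h
  induction n with
  | zero => exact subset_rfl
  | succ n ih => rw [Function.iterate_succ_apply']; exact ih.trans (subset_parH hl _)

/-- Key: every non-singleton member of the hierarchy, and every point in it, admits a
"child" containing this point. -/
lemma exists_child (S : Vx ε) {x : X} (hx : x ∈ S.val) (hne : ({x} : Set X) ≠ S.val) :
    ∃ C : Vx ε, x ∈ C.val ∧ C.val ⊂ S.val ∧ parH ε hl C = S := by
  set F : Set (Set X) := {T | T ∈ Hier ε ∧ x ∈ T ∧ T ⊂ S.val} with hF
  have hFne : F.Nonempty := by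
    refine ⟨{x}, singleton_mem_Hier x, rfl, ?_⟩
    exact lt_of_le_of_ne (Set.singleton_subset_iff.mpr hx) hne
  obtain ⟨C, hCF, hCmax⟩ := Set.Finite.exists_maximalFor Set.ncard F (Set.toFinite F) hFne
  refine ⟨⟨C, hCF.1⟩, hCF.2.1, hCF.2.2, ?_⟩
  have hp := parH_spec hl ⟨C, hCF.1⟩ ⟨S.val, S.2, hCF.2.2⟩
  set L := parH ε hl ⟨C, hCF.1⟩ with hL
  have hLsub : L.val ⊆ S.val := hp.2 S.val S.2 hCF.2.2
  apply Subtype.ext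
  by_contra hLS
  have hLss : L.val ⊂ S.val := ⟨hLsub, fun h' => hLS (le_antisymm hLsub h')⟩
  have hLF : L.val ∈ F := ⟨L.2, hp.1.subset hCF.2.1, hLss⟩
  have := hCmax hLF (Set.ncard_le_ncard hp.1.subset (Set.toFinite _))
  exact absurd this (Nat.not_le.mpr (Set.ncard_lt_ncard hp.1 (Set.toFinite _)))

end Backward
end FitchAux

namespace FitchAux
section Build
set_option linter.unusedSectionVars false
open Function Set
variable {X M : Type} [Fintype X] [Nonempty X] {ε : X → X → Set M}
variable (hl : HLike (NbrSet ε))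

lemma two_children (v : Vx ε) (hns : ∀ x : X, ({x} : Set X) ≠ v.val) :
    ∃ C1 C2 : Vx ε, C1 ≠ C2 ∧ (parH ε hl C1 = v ∧ C1 ≠ v) ∧ (parH ε hl C2 = v ∧ C2 ≠ v) := by
  obtain ⟨x0, hx0⟩ := Hier_nonempty v.2
  obtain ⟨C0, hC0x, hC0ss, hC0p⟩ := exists_child hl v hx0 (hns x0)
  obtain ⟨x1, hx1v, hx1C⟩ := Set.exists_of_ssubset hC0ss
  obtain ⟨C1, hC1x, hC1ss, hC1p⟩ := exists_child hl v hx1v (hns x1)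
  refine ⟨C0, C1, ?_, ⟨hC0p, ?_⟩, ⟨hC1p, ?_⟩⟩
  · intro h; exact hx1C (h ▸ hC1x)
  · intro h; exact hC0ss.ne (congrArg Subtype.val h)
  · intro h; exact hC1ss.ne (congrArg Subtype.val h)

variable (ε) in
/-- The tree explaining `ε`, built from the hierarchy `Hier ε`. -/
noncomputable def treeOf : PhyloTree (Vx ε) X where
  fin := inferInstance
  root := ⟨Set.univ, univ_mem_Hier⟩
  par := parH ε hl
  par_root := parH_univ hl
  reach := parH_reach hl
  leaf x := ⟨{x}, singleton_mem_Hier x⟩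
  leaf_inj := by
    intro a b h
    exact Set.singleton_eq_singleton_iff.mp (congrArg Subtype.val h)
  leaf_isLeaf := by
    intro x u h
    by_cases hu : {T | T ∈ Hier ε ∧ u.val ⊂ T}.Nonempty
    · exfalso
      have hp := parH_spec hl u hu
      rw [h] at hp
      have hss : u.val ⊂ {x} := hp.1
      exact hss.ne ((Hier_nonempty u.2).subset_singleton_iff.mp hss.subset)
    · rw [parH_eq_self hl u hu] at h; exact h
  leaf_only := by
    intro v hv
    by_contra h
    push_neg at h
    obtain ⟨x, hx⟩ := Hier_nonempty v.2
    have hne : ({x} : Set X) ≠ v.val := fun h' => h x (Subtype.ext h')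
    obtain ⟨C, hC1, hC2, hC3⟩ := exists_child hl v hx hne
    exact hC2.ne (congrArg Subtype.val (hv C hC3))
  root_deg := by
    by_cases h : ∃ x : X, ({x} : Set X) = Set.univ
    · obtain ⟨x, hx⟩ := h
      exact Or.inl ⟨x, Subtype.ext hx⟩
    · right
      push_neg at h
      obtain ⟨C1, C2, hne, h1, h2⟩ := two_children hl ⟨Set.univ, univ_mem_Hier⟩ (by simpa using h)
      exact (Set.one_lt_ncard_iff (Set.toFinite _)).mpr ⟨C1, C2, h1, h2, hne⟩
  inner_deg := by
    intro v hvroot hvleaf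
    push_neg at hvleaf
    have hns : ∀ x : X, ({x} : Set X) ≠ v.val := fun x hx => hvleaf x (Subtype.ext hx)
    obtain ⟨C1, C2, hne, h1, h2⟩ := two_children hl v hns
    exact (Set.one_lt_ncard_iff (Set.toFinite _)).mpr ⟨C1, C2, h1, h2, hne⟩

lemma treeOf_anc_iff {u v : Vx ε} : (treeOf ε hl).anc u v ↔ v.val ⊆ u.val := by
  constructor
  · intro h; exact anc_subset hl h
  · intro h; exact parH_anc hl h

variable (ε) in
/-- The edge labelling. -/
def labOf : Vx ε → Set M := fun S => {m | ∃ z : X, Nbr ε m z = S.val}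

lemma explains_treeOf (hic : IneqCond ε) : Explains (treeOf ε hl) (labOf ε) ε := by
  intro x y hxy m
  constructor
  · intro hm
    have hxN : x ∉ Nbr ε m y := by
      rw [mem_nbr_iff hxy]; simp [hm]
    -- the least member of the hierarchy containing both x and y is the lca
    set F : Set (Set X) := {T | T ∈ Hier ε ∧ x ∈ T ∧ y ∈ T} with hF
    have hFne : F.Nonempty := ⟨Set.univ, univ_mem_Hier, trivial, trivial⟩
    obtain ⟨L, hLF, hLmin⟩ := exists_least hl (fun T hT => hT.1) hFne x (fun S hS => hS.2.1)
    set l : Vx ε := ⟨L, hLF.1⟩ with hldef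
    have hlca : (treeOf ε hl).IsLca l ((treeOf ε hl).leaf x) ((treeOf ε hl).leaf y) := by
      refine ⟨(treeOf_anc_iff hl).mpr (Set.singleton_subset_iff.mpr hLF.2.1),
        (treeOf_anc_iff hl).mpr (Set.singleton_subset_iff.mpr hLF.2.2), ?_⟩
      intro u hux huy
      rw [treeOf_anc_iff hl] at hux huy ⊢
      exact hLmin u.val ⟨u.2, Set.singleton_subset_iff.mp hux, Set.singleton_subset_iff.mp huy⟩
    set N : Vx ε := ⟨Nbr ε m y, nbr_mem_Hier m y⟩ with hNdef
    have hNL : Nbr ε m y ⊆ L := by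
      rcases Hier_comp hl (nbr_mem_Hier m y) hLF.1 (mem_nbr_self m y) hLF.2.2 with h | h
      · exact h
      · exact absurd (h hLF.2.1) hxN
    refine ⟨l, hlca, N, ⟨(treeOf_anc_iff hl).mpr hNL, ?_, (treeOf_anc_iff hl).mpr
      (Set.singleton_subset_iff.mpr (mem_nbr_self m y))⟩, ⟨y, rfl⟩⟩
    intro h
    have : x ∈ Nbr ε m y := by
      rw [show Nbr ε m y = L from congrArg Subtype.val h]
      exact hLF.2.1
    exact hxN this
  · rintro ⟨l, hlca, u, ⟨hlu, hune, huy⟩, hm⟩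
    obtain ⟨z, hz⟩ := hm
    by_contra hcon
    have hxN : x ∈ Nbr ε m y := (mem_nbr_iff hxy).mpr hcon
    have hyu : y ∈ u.val := Set.singleton_subset_iff.mp ((treeOf_anc_iff hl).mp huy)
    have hyz : y ∈ Nbr ε m z := hz ▸ hyu
    have hNu : Nbr ε m y ⊆ u.val := hz ▸ nbr_mono hl hic hyz
    have hlN : l.val ⊆ Nbr ε m y := by
      have h1 : (treeOf ε hl).anc ⟨Nbr ε m y, nbr_mem_Hier m y⟩ ((treeOf ε hl).leaf x) :=
        (treeOf_anc_iff hl).mpr (Set.singleton_subset_iff.mpr hxN)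
      have h2 : (treeOf ε hl).anc ⟨Nbr ε m y, nbr_mem_Hier m y⟩ ((treeOf ε hl).leaf y) :=
        (treeOf_anc_iff hl).mpr (Set.singleton_subset_iff.mpr (mem_nbr_self m y))
      exact (treeOf_anc_iff hl).mp (hlca.2.2 _ h1 h2)
    have hul : u.val ⊆ l.val := (treeOf_anc_iff hl).mp hlu
    have : u.val = l.val := subset_antisymm hul (hlN.trans hNu)
    exact hune (Subtype.ext this)

end Build
end FitchAux

/-- `ε` is a Fitch map iff `N[ε]` is hierarchy-like (HLC) and `ε`
satisfies the inequality condition (IC). -/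
theorem fitch_iff_hlc_ic {X M : Type} [Fintype X] [Fintype M] [Nonempty X] [Nonempty M]
    (ε : X → X → Set M) :
    IsFitchMap ε ↔ HLike (NbrSet ε) ∧ IneqCond ε := by
  constructor
  · rintro ⟨V, T, lab, hex⟩
    exact ⟨FitchAux.forward_hlc T hex, FitchAux.forward_ic T hex⟩
  · rintro ⟨hl, hic⟩
    exact ⟨FitchAux.Vx ε, FitchAux.treeOf ε hl, FitchAux.labOf ε,
      FitchAux.explains_treeOf hl hic⟩
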